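/- A Borel measurable function f : ℝⁿ → ℝ is level convex if and only if it satisfies the supremal Jensen inequality: f(∫_Ω φ dμ) ≤ μ-ess sup_{x∈Ω} f(φ(x)) for every probability measure μ on ℝ^d supported on an open set Ω ⊆ ℝ^d and every φ ∈ L¹_μ(Ω; ℝⁿ). -/

import Mathlib

open Set MeasureTheory

/-- A function on `ℝⁿ` with values in a linear order is *level convex* if
`f (t ξ + (1-t) η) ≤ max (f ξ) (f η)` for all `ξ, η` and `t ∈ [0,1]`. -/
def LevelConvex {n : ℕ} {β : Type*} [LinearOrder β]
    (f : EuclideanSpace ℝ (Fin n) → β) : Prop :=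
  ∀ ξ η : EuclideanSpace ℝ (Fin n), ∀ t ∈ Set.Icc (0 : ℝ) 1,
    f (t • ξ + (1 - t) • η) ≤ max (f ξ) (f η)

section Aux
open Pointwise

/-- Barycenter of a probability measure concentrated on a convex set (not necessarily
closed) belongs to the set, in finite dimensions. -/
lemma barycenter_mem_convex {n : ℕ} (k : ℕ) :
    ∀ (ν : Measure (EuclideanSpace ℝ (Fin n))), IsProbabilityMeasure ν →
    ∀ C : Set (EuclideanSpace ℝ (Fin n)), Convex ℝ C → ν Cᶜ = 0 →
    Integrable id ν →
    Module.finrank ℝ (Submodule.span ℝ ((fun x => x - ∫ y, y ∂ν) '' C)) ≤ k →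
    (∫ y, y ∂ν) ∈ C := by
  induction k with
  | zero =>
    intro ν hν C hC hCc hint hrk
    set b := ∫ y, y ∂ν with hb
    have hspan : Submodule.span ℝ ((fun x => x - b) '' C) = ⊥ :=
      Submodule.finrank_eq_zero.mp (Nat.le_zero.mp hrk)
    have hsub : C ⊆ {b} := by
      intro x hx
      have hmem : x - b ∈ Submodule.span ℝ ((fun x => x - b) '' C) :=
        Submodule.subset_span ⟨x, hx, rfl⟩
      rw [hspan, Submodule.mem_bot] at hmem
      simpa [sub_eq_zero] using hmem
    have hCne : C.Nonempty := by
      by_contra h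
      rw [not_nonempty_iff_eq_empty] at h
      rw [h, compl_empty, measure_univ] at hCc
      exact one_ne_zero hCc
    obtain ⟨c, hc⟩ := hCne
    have : c = b := hsub hc
    rwa [← this]
  | succ k ih =>
    intro ν hν C hC hCc hint hrk
    set b := ∫ y, y ∂ν with hb
    by_cases hbC : b ∈ C
    · exact hbC
    have haeC : ∀ᵐ x ∂ν, x ∈ C := by
      rw [ae_iff]; exact hCc
    have hbcl : b ∈ closure C := by
      have := (hC.closure).integral_mem isClosed_closure
        (haeC.mono fun x hx => subset_closure hx) hint
      simpa using this
    -- translate so that the barycenter is 0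
    set C' := (fun x => x - b) '' C with hC'def
    have hC' : Convex ℝ C' := by
      rintro u ⟨x, hx, rfl⟩ v ⟨y, hy, rfl⟩ a c ha hc hac
      refine ⟨a • x + c • y, hC hx hy ha hc hac, ?_⟩
      have h1 : a • (x - b) + c • (y - b) = a • x + c • y - (a + c) • b := by module
      rw [h1, hac, one_smul]
    have h0C' : (0 : EuclideanSpace ℝ (Fin n)) ∉ C' := by
      rintro ⟨x, hx, hx0⟩
      rw [sub_eq_zero] at hx0
      exact hbC (hx0 ▸ hx)
    have h0cl : (0 : EuclideanSpace ℝ (Fin n)) ∈ closure C' := by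
      have h1 : (fun x => x - b) b ∈ (fun x => x - b) '' closure C := ⟨b, hbcl, rfl⟩
      have h2 := image_closure_subset_closure_image
        (f := fun x => x - b) (s := C) (by fun_prop) h1
      simpa using h2
    have hCne : C.Nonempty := by
      by_contra h
      rw [not_nonempty_iff_eq_empty] at h
      rw [h, compl_empty, measure_univ] at hCc
      exact one_ne_zero hCc
    obtain ⟨c₀, hc₀C⟩ := hCne
    have hc₀ : c₀ - b ∈ C' := ⟨c₀, hc₀C, rfl⟩
    set c₁ := c₀ - b with hc₁def
    -- span of C' and a complement
    set V := Submodule.span ℝ C' with hVdef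
    obtain ⟨W, hW⟩ := Submodule.exists_isCompl V
    -- thickened set
    set S := C' + (W : Set (EuclideanSpace ℝ (Fin n))) with hSdef
    have hSconv : Convex ℝ S := hC'.add W.convex
    have h0S : (0 : EuclideanSpace ℝ (Fin n)) ∉ S := by
      rintro ⟨x, hx, w, hw, hxw⟩
      have hxV : x ∈ V := Submodule.subset_span hx
      have hxW : x ∈ W := by
        have : x = -w := by
          have : x + w = 0 := hxw
          linear_combination (norm := module) this
        rw [this]; exact W.neg_mem hw
      have : x ∈ V ⊓ W := ⟨hxV, hxW⟩
      rw [hW.inf_eq_bot, Submodule.mem_bot] at this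
      rw [this] at hx
      exact h0C' hx
    have hc₁S : c₁ ∈ S := ⟨c₁, hc₀, 0, W.zero_mem, by simp⟩
    -- the vector span of S is everything
    have hvs : vectorSpan ℝ S = ⊤ := by
      rw [eq_top_iff, ← hW.sup_eq_top]
      have hWle : W ≤ vectorSpan ℝ S := by
        intro w hw
        have h1 : c₁ + w ∈ S := ⟨c₁, hc₀, w, hw, rfl⟩
        have := vsub_mem_vectorSpan ℝ h1 hc₁S
        simpa using this
      have hc₁vs : c₁ ∈ vectorSpan ℝ S := by
        -- use 0 ∈ closure C' and closedness of {x | x - c₁ ∈ vectorSpan S}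
        have hKclosed : IsClosed {x : EuclideanSpace ℝ (Fin n) |
            x - c₁ ∈ vectorSpan ℝ S} := by
          have : IsClosed ((vectorSpan ℝ S : Set (EuclideanSpace ℝ (Fin n)))) :=
            Submodule.closed_of_finiteDimensional _
        
          exact IsClosed.preimage (by fun_prop) this
        have hsub : C' ⊆ {x : EuclideanSpace ℝ (Fin n) | x - c₁ ∈ vectorSpan ℝ S} := by
          intro x hx
          have hxS : x ∈ S := ⟨x, hx, 0, W.zero_mem, by simp⟩
          exact vsub_mem_vectorSpan ℝ hxS hc₁S
        have h0 : (0 : EuclideanSpace ℝ (Fin n)) ∈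
            {x : EuclideanSpace ℝ (Fin n) | x - c₁ ∈ vectorSpan ℝ S} :=
          closure_minimal hsub hKclosed h0cl
        have : -c₁ ∈ vectorSpan ℝ S := by simpa using h0
        simpa using (vectorSpan ℝ S).neg_mem this
      have hVle : V ≤ vectorSpan ℝ S := by
        rw [hVdef, Submodule.span_le]
        intro x hx
        have hxS : x ∈ S := ⟨x, hx, 0, W.zero_mem, by simp⟩
        have h1 : x - c₁ ∈ vectorSpan ℝ S := vsub_mem_vectorSpan ℝ hxS hc₁S
        have : (x - c₁) + c₁ ∈ vectorSpan ℝ S := (vectorSpan ℝ S).add_mem h1 hc₁vs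
        simpa using this
      exact sup_le hVle hWle
    have haff : affineSpan ℝ S = ⊤ := by
      rw [eq_top_iff]
      intro z _
      have hz : z - c₁ ∈ (affineSpan ℝ S).direction := by
        rw [direction_affineSpan, hvs]; trivial
      have := AffineSubspace.vadd_mem_of_mem_direction hz
        (mem_affineSpan ℝ hc₁S)
      simpa using this
    have hint_ne : (interior S).Nonempty :=
      (hSconv.interior_nonempty_iff_affineSpan_eq_top).mpr haff
    -- separating functional
    obtain ⟨ℓ, hℓ⟩ := geometric_hahn_banach_open_point
      (hSconv.interior) isOpen_interior
      (fun h => h0S (interior_subset h))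
    have hℓ0 : ∀ z ∈ interior S, ℓ z < 0 := by
      intro z hz; simpa using hℓ z hz
    -- ℓ ≤ 0 on S
    obtain ⟨y₀, hy₀⟩ := hint_ne
    have hSle : ∀ x ∈ S, ℓ x ≤ 0 := by
      intro x hx
      have hcl : x ∈ closure (interior S) := by
        have htend : Filter.Tendsto (fun t : ℝ => x + t • (y₀ - x))
            (nhdsWithin 0 (Set.Ioi 0)) (nhds x) := by
          have hcont : Filter.Tendsto (fun t : ℝ => x + t • (y₀ - x))
              (nhds 0) (nhds x) := by
            have : Continuous (fun t : ℝ => x + t • (y₀ - x)) := by fun_prop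
            simpa using this.tendsto 0
          exact hcont.mono_left nhdsWithin_le_nhds
        refine mem_closure_of_tendsto htend ?_
        filter_upwards [Ioo_mem_nhdsGT_of_mem (by norm_num : (0:ℝ) ∈ Set.Ico 0 1)]
          with t ht
        exact hSconv.add_smul_sub_mem_interior hx hy₀ ⟨ht.1, ht.2.le⟩
      have : closure (interior S) ⊆ {z | ℓ z ≤ 0} := by
        apply closure_minimal
        · intro z hz; exact (hℓ0 z hz).le
        · exact IsClosed.preimage ℓ.continuous isClosed_Iic
      exact this hcl
    -- ℓ is strictly negative somewhere on C'
    have hexy : ∃ y ∈ C', ℓ y < 0 := by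
      by_contra h
      push_neg at h
      have hC'0 : ∀ y ∈ C', ℓ y = 0 := fun y hy =>
        le_antisymm (hSle y ⟨y, hy, 0, W.zero_mem, by simp⟩) (h y hy)
      have hW0 : ∀ w ∈ W, ℓ w = 0 := by
        intro w hw
        have h1 : ∀ t : ℝ, ℓ c₁ + t * ℓ w ≤ 0 := by
          intro t
          have : c₁ + t • w ∈ S := ⟨c₁, hc₀, t • w, W.smul_mem t hw, rfl⟩
          have h2 := hSle _ this
          simpa [map_add, _root_.map_smul, smul_eq_mul] using h2
        have hc₁0 : ℓ c₁ = 0 := hC'0 c₁ hc₀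
        rw [hc₁0] at h1
        have hp := h1 1; have hm := h1 (-1)
        simp at hp hm
        linarith
      -- then ℓ = 0 on S, contradicting strict negativity on interior
      have : ℓ y₀ < 0 := hℓ0 y₀ hy₀
      obtain ⟨x, hx, w, hw, hxw⟩ := interior_subset hy₀
      rw [← hxw] at this
      rw [map_add, hC'0 x hx, hW0 w hw] at this
      norm_num at this
    obtain ⟨y, hyC', hylt⟩ := hexy
    -- the function x ↦ ℓ (x - b) vanishes a.e.
    have hgint : Integrable (fun x => ℓ (x - b)) ν := by
      have h1 : Integrable (fun x : EuclideanSpace ℝ (Fin n) => x - b) ν :=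
        hint.sub (integrable_const b)
      exact ℓ.integrable_comp h1
    have hgzero : ∫ x, ℓ (x - b) ∂ν = 0 := by
      have h1 : Integrable (fun x : EuclideanSpace ℝ (Fin n) => x - b) ν :=
        hint.sub (integrable_const b)
      rw [ℓ.integral_comp_comm h1]
      have hint' : Integrable (fun x : EuclideanSpace ℝ (Fin n) => x) ν := hint
      have h2 : ∫ x, (x - b) ∂ν = 0 := by
        rw [integral_sub hint' (integrable_const b), integral_const]
        simp [← hb]
      rw [h2, map_zero]
    have hgle : ∀ᵐ x ∂ν, ℓ (x - b) ≤ 0 := by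
      filter_upwards [haeC] with x hx
      exact hSle (x - b) ⟨x - b, ⟨x, hx, rfl⟩, 0, W.zero_mem, by simp⟩
    have hgae : ∀ᵐ x ∂ν, ℓ (x - b) = 0 := by
      have hneg : (0 : EuclideanSpace ℝ (Fin n) → ℝ) ≤ᵐ[ν] fun x => -ℓ (x - b) := by
        filter_upwards [hgle] with x hx
        simpa using hx
      have hnegint : Integrable (fun x => -ℓ (x - b)) ν := hgint.neg
      have hnegzero : ∫ x, -ℓ (x - b) ∂ν = 0 := by
        rw [integral_neg, hgzero, neg_zero]
      have := (integral_eq_zero_iff_of_nonneg_ae hneg hnegint).mp hnegzero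
      filter_upwards [this] with x hx
      exact neg_eq_zero.mp hx
    -- the reduced set
    set C₁ := {x | x ∈ C ∧ ℓ (x - b) = 0} with hC₁def
    have hC₁c : ν C₁ᶜ = 0 := by
      have h1 : C₁ᶜ ⊆ Cᶜ ∪ {x | ℓ (x - b) ≠ 0} := by
        intro x hx
        by_cases hxC : x ∈ C
        · right
          intro h0
          exact hx ⟨hxC, h0⟩
        · left; exact hxC
      refine measure_mono_null h1 (measure_union_null hCc ?_)
      rw [← ae_iff] at *
      exact hgae
    have hC₁conv : Convex ℝ C₁ := by
      rintro x ⟨hxC, hxℓ⟩ z ⟨hzC, hzℓ⟩ a c ha hc hac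
      refine ⟨hC hxC hzC ha hc hac, ?_⟩
      have h1 : a • x + c • z - b = a • (x - b) + c • (z - b) := by
        have : a • x + c • z - (a + c) • b = a • (x - b) + c • (z - b) := by module
        rw [hac, one_smul] at this
        exact this
      rw [h1, map_add, _root_.map_smul, _root_.map_smul, hxℓ, hzℓ]
      simp
    have hrk₁ : Module.finrank ℝ
        (Submodule.span ℝ ((fun x => x - b) '' C₁)) ≤ k := by
      have hle : Submodule.span ℝ ((fun x => x - b) '' C₁) ≤ V ⊓ LinearMap.ker (ℓ : EuclideanSpace ℝ (Fin n) →ₗ[ℝ] ℝ) := by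
        rw [Submodule.span_le]
        rintro _ ⟨x, ⟨hxC, hxℓ⟩, rfl⟩
        exact ⟨Submodule.subset_span ⟨x, hxC, rfl⟩, hxℓ⟩
      have hlt : V ⊓ LinearMap.ker (ℓ : EuclideanSpace ℝ (Fin n) →ₗ[ℝ] ℝ) < V := by
        refine lt_of_le_of_ne inf_le_left ?_
        intro heq
        have hyV : y ∈ V := Submodule.subset_span hyC'
        have : y ∈ V ⊓ LinearMap.ker (ℓ : EuclideanSpace ℝ (Fin n) →ₗ[ℝ] ℝ) := heq.symm ▸ hyV
        have : ℓ y = 0 := this.2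
        rw [this] at hylt
        norm_num at hylt
      have hcalc : Module.finrank ℝ
          (Submodule.span ℝ ((fun x => x - b) '' C₁)) < k + 1 :=
        calc Module.finrank ℝ (Submodule.span ℝ ((fun x => x - b) '' C₁))
          ≤ Module.finrank ℝ (V ⊓ LinearMap.ker (ℓ : EuclideanSpace ℝ (Fin n) →ₗ[ℝ] ℝ) : Submodule ℝ _) :=
            Submodule.finrank_mono hle
        _ < Module.finrank ℝ V := Submodule.finrank_lt_finrank_of_lt hlt
        _ ≤ k + 1 := hrk
      exact Nat.lt_succ_iff.mp hcalc
    have hbC₁ : b ∈ C₁ := ih ν hν C₁ hC₁conv hC₁c hint hrk₁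
    exact hbC₁.1

end Aux

/-- A Borel measurable `f : ℝⁿ → ℝ` is level convex if and only if it satisfies the
supremal Jensen inequality `f (∫_Ω φ dμ) ≤ μ-ess sup_{x ∈ Ω} f (φ x)` for every
probability measure `μ` on `ℝ^d` supported on an open set `Ω ⊆ ℝ^d` and every
`φ ∈ L¹_μ(Ω; ℝⁿ)`. -/
theorem levelConvex_iff_supremal_jensen {n : ℕ}
    (f : EuclideanSpace ℝ (Fin n) → ℝ) (hf : Measurable f) :
    LevelConvex f ↔
      ∀ (d : ℕ) (Ω : Set (EuclideanSpace ℝ (Fin d)))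
        (μ : Measure (EuclideanSpace ℝ (Fin d))),
        IsOpen Ω → IsProbabilityMeasure μ → μ Ωᶜ = 0 →
        ∀ φ : EuclideanSpace ℝ (Fin d) → EuclideanSpace ℝ (Fin n),
          Integrable φ μ →
          (f (∫ x, φ x ∂μ) : EReal) ≤ essSup (fun x => (f (φ x) : EReal)) μ := by
  constructor
  · -- level convexity implies supremal Jensen
    intro hlc d Ω μ hΩ hμ hΩc φ hφ
    set M := essSup (fun x => (f (φ x) : EReal)) μ with hM
    have hae : ∀ᵐ x ∂μ, (f (φ x) : EReal) ≤ M := ae_le_essSup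
    by_cases hMtop : M = ⊤
    · rw [hMtop]; exact le_top
    have hMbot : M ≠ ⊥ := by
      intro h
      rw [h] at hae
      have h2 : ∀ᵐ (_x : EuclideanSpace ℝ (Fin d)) ∂μ, False := by
        filter_upwards [hae] with x hx
        exact (EReal.coe_ne_bot _) (le_bot_iff.mp hx)
      rw [ae_iff] at h2
      simp only [not_false_eq_true, setOf_true] at h2
      rw [measure_univ] at h2
      exact one_ne_zero h2
    set m := M.toReal with hm
    have hmM : (m : EReal) = M := EReal.coe_toReal hMtop hMbot
    set C : Set (EuclideanSpace ℝ (Fin n)) := {ξ | f ξ ≤ m} with hC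
    have hCconv : Convex ℝ C := by
      intro x hx y hy a c ha hc hac
      have hc' : c = 1 - a := by linarith
      have h1 := hlc x y a ⟨ha, by linarith⟩
      rw [← hc'] at h1
      exact le_trans h1 (max_le hx hy)
    have hφm : AEMeasurable φ μ := hφ.aestronglyMeasurable.aemeasurable
    set ν := Measure.map φ μ with hν
    haveI : IsProbabilityMeasure ν := Measure.isProbabilityMeasure_map hφm
    have hCmeas : MeasurableSet C := hf measurableSet_Iic
    have hνC : ν Cᶜ = 0 := by
      rw [hν, Measure.map_apply_of_aemeasurable hφm hCmeas.compl]
      have hmem : ∀ᵐ x ∂μ, φ x ∈ C := by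
        filter_upwards [hae] with x hx
        have h3 : (f (φ x) : EReal) ≤ (m : EReal) := hmM ▸ hx
        exact EReal.coe_le_coe_iff.mp h3
      rw [ae_iff] at hmem
      exact hmem
    have hνint : Integrable id ν :=
      (integrable_map_measure aestronglyMeasurable_id hφm).mpr (by simpa using hφ)
    have hbar : (∫ y, y ∂ν) = ∫ x, φ x ∂μ := integral_map hφm aestronglyMeasurable_id
    have hrk : Module.finrank ℝ
        (Submodule.span ℝ ((fun x => x - ∫ y, y ∂ν) '' C)) ≤ n := by
      refine le_trans (Submodule.finrank_le _) (le_of_eq ?_)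
      simp [finrank_euclideanSpace]
    have hmem := barycenter_mem_convex n ν inferInstance C hCconv hνC hνint hrk
    rw [hbar] at hmem
    have hfb : f (∫ x, φ x ∂μ) ≤ m := hmem
    calc ((f (∫ x, φ x ∂μ)) : EReal) ≤ (m : EReal) := EReal.coe_le_coe_iff.mpr hfb
      _ = M := hmM
  · -- supremal Jensen implies level convexity
    intro h ξ η t ht
    classical
    set x₀ : EuclideanSpace ℝ (Fin 1) := 0 with hx₀
    set x₁ : EuclideanSpace ℝ (Fin 1) := EuclideanSpace.single 0 1 with hx₁
    have hxne : x₁ ≠ x₀ := by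
      intro hEq
      have h1 : x₁ 0 = x₀ 0 := by rw [hEq]
      rw [hx₁, hx₀] at h1
      simp [EuclideanSpace.single_apply] at h1
    set μ : Measure (EuclideanSpace ℝ (Fin 1)) :=
      ENNReal.ofReal t • Measure.dirac x₀ + ENNReal.ofReal (1 - t) • Measure.dirac x₁
      with hμdef
    have hprob : IsProbabilityMeasure μ := by
      constructor
      rw [hμdef]
      simp only [Measure.add_apply, Measure.smul_apply, measure_univ, smul_eq_mul, mul_one]
      rw [← ENNReal.ofReal_add ht.1 (by linarith [ht.2])]
      norm_num
    set φ : EuclideanSpace ℝ (Fin 1) → EuclideanSpace ℝ (Fin n) :=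
      fun x => if x = x₀ then ξ else η with hφdef
    have hφx₀ : φ x₀ = ξ := if_pos rfl
    have hφx₁ : φ x₁ = η := if_neg hxne
    have hφmeas : Measurable φ :=
      Measurable.ite (measurableSet_eq) measurable_const measurable_const
    have hφint : Integrable φ μ := by
      refine Integrable.mono' (integrable_const (‖ξ‖ + ‖η‖))
        hφmeas.aestronglyMeasurable ?_
      filter_upwards with x
      by_cases hx : x = x₀
      · rw [hφdef]; simp only [hx, if_pos rfl]
        exact le_add_of_nonneg_right (norm_nonneg η)
      · rw [hφdef]; simp only [if_neg hx]
        exact le_add_of_nonneg_left (norm_nonneg ξ)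
    have hint1 : Integrable φ (ENNReal.ofReal t • Measure.dirac x₀) :=
      hφint.mono_measure (by rw [hμdef]; exact Measure.le_add_right le_rfl)
    have hint2 : Integrable φ (ENNReal.ofReal (1 - t) • Measure.dirac x₁) :=
      hφint.mono_measure (by rw [hμdef]; exact Measure.le_add_left le_rfl)
    have hintegral : ∫ x, φ x ∂μ = t • ξ + (1 - t) • η := by
      rw [hμdef, integral_add_measure hint1 hint2, integral_smul_measure,
        integral_smul_measure, integral_dirac, integral_dirac, hφx₀, hφx₁,
        ENNReal.toReal_ofReal ht.1, ENNReal.toReal_ofReal (by linarith [ht.2])]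
    have hess : essSup (fun x => (f (φ x) : EReal)) μ ≤
        ((max (f ξ) (f η) : ℝ) : EReal) := by
      apply essSup_le_of_ae_le (hfbdd := by isBoundedDefault)
      filter_upwards with x
      by_cases hx : x = x₀
      · rw [hφdef]; simp only [hx, if_pos rfl]
        exact EReal.coe_le_coe_iff.mpr (le_max_left _ _)
      · rw [hφdef]; simp only [if_neg hx]
        exact EReal.coe_le_coe_iff.mpr (le_max_right _ _)
    have hfin := h 1 Set.univ μ isOpen_univ hprob (by simp) φ hφint
    rw [hintegral] at hfin
    exact EReal.coe_le_coe_iff.mp (le_trans hfin hess)
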